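/- Consider the closed-loop rigid body attitude dynamics J Ω̇ + Ω × J Ω = u with kinematics Ṙ = R Ω̂, under the feedback law u = −k_R e_R − k_Ω Ω + Ω × J Ω, where e_R = e_{R_A} B(R) + A(R) e_{R_B} with A, B, e_{R_A}, e_{R_B} as defined, and k_R, k_Ω > 0. Then the Lyapunov function V = (1/2) Ω · J Ω + k_R A(R) B(R) satisfies dV/dt = −k_Ω ‖Ω‖² ≤ 0 along trajectories. -/

import Mathlib

open Matrix

noncomputable section

attribute [local instance] Matrix.frobeniusNormedAddCommGroup Matrix.frobeniusNormedSpace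

/-- The hat map sending `x ∈ ℝ³` to the skew-symmetric matrix `x̂` with `x̂ y = x × y`. -/
def hat (x : Fin 3 → ℝ) : Matrix (Fin 3) (Fin 3) ℝ :=
  !![0, -x 2, x 1; x 2, 0, -x 0; -x 1, x 0, 0]

/-- The vee map, inverse of the hat map on skew-symmetric matrices. -/
def vee (A : Matrix (Fin 3) (Fin 3) ℝ) : Fin 3 → ℝ :=
  ![A 2 1, A 0 2, A 1 0]

lemma trace_mul_hat (M : Matrix (Fin 3) (Fin 3) ℝ) (x : Fin 3 → ℝ) :
    Matrix.trace (M * hat x) = -(vee (M - Mᵀ) ⬝ᵥ x) := by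
  simp [Matrix.trace, Matrix.mul_apply, Fin.sum_univ_three, hat, vee, dotProduct,
    Matrix.sub_apply, Matrix.transpose_apply, Matrix.diag]
  ring

lemma dot_hatT (x w r : Fin 3 → ℝ) : r ⬝ᵥ ((hat x)ᵀ *ᵥ w) = -(crossProduct w r ⬝ᵥ x) := by
  simp [hat, dotProduct, Matrix.mulVec, Fin.sum_univ_three, cross_apply,
    Matrix.transpose_apply]
  ring

lemma hasDerivAt_trace_mul (C : Matrix (Fin 3) (Fin 3) ℝ) (R : ℝ → Matrix (Fin 3) (Fin 3) ℝ)
    (R' : Matrix (Fin 3) (Fin 3) ℝ) (t : ℝ) (hkin : HasDerivAt R R' t) :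
    HasDerivAt (fun s => Matrix.trace (C * R s)) (Matrix.trace (C * R')) t := by
  let L : Matrix (Fin 3) (Fin 3) ℝ →ₗ[ℝ] ℝ :=
    (Matrix.traceLinearMap (Fin 3) ℝ ℝ).comp (LinearMap.mulLeft ℝ C)
  have h := (LinearMap.toContinuousLinearMap L).hasFDerivAt.comp_hasDerivAt t hkin
  exact h

lemma hasDerivAt_dot_transpose (v r : Fin 3 → ℝ) (R : ℝ → Matrix (Fin 3) (Fin 3) ℝ)
    (R' : Matrix (Fin 3) (Fin 3) ℝ) (t : ℝ) (hkin : HasDerivAt R R' t) :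
    HasDerivAt (fun s => r ⬝ᵥ ((R s)ᵀ *ᵥ v)) (r ⬝ᵥ (R'ᵀ *ᵥ v)) t := by
  let L : Matrix (Fin 3) (Fin 3) ℝ →ₗ[ℝ] ℝ :=
    { toFun := fun M => r ⬝ᵥ (Mᵀ *ᵥ v)
      map_add' := by intro M N; simp [Matrix.transpose_add, Matrix.add_mulVec]
      map_smul' := by intro c M; simp [Matrix.transpose_smul, Matrix.smul_mulVec] }
  have h := (LinearMap.toContinuousLinearMap L).hasFDerivAt.comp_hasDerivAt t hkin
  exact h

theorem lyapunov_decrease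
    (J : Matrix (Fin 3) (Fin 3) ℝ) (hJsymm : Jᵀ = J) (hJpd : J.PosDef)
    (g1 g2 g3 : ℝ) (hg1 : 0 < g1) (hg2 : 0 < g2) (hg3 : 0 < g3)
    (Rd : Matrix (Fin 3) (Fin 3) ℝ) (hRd : Rdᵀ * Rd = 1) (hRddet : Rd.det = 1)
    (r v : Fin 3 → ℝ) (hr : r ⬝ᵥ r = 1) (hv : v ⬝ᵥ v = 1)
    (α θ kR kΩ : ℝ) (hα : 0 < α) (hθ : θ ∈ Set.Ioo 0 (Real.pi / 2))
    (hkR : 0 < kR) (hkΩ : 0 < kΩ)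
    (R : ℝ → Matrix (Fin 3) (Fin 3) ℝ) (Ω Ω' : ℝ → Fin 3 → ℝ)
    (hSO : ∀ t, (R t)ᵀ * R t = 1 ∧ (R t).det = 1)
    (hcon : ∀ t, r ⬝ᵥ ((R t)ᵀ *ᵥ v) < Real.cos θ)
    (hkin : ∀ t, HasDerivAt R (R t * hat (Ω t)) t)
    (hΩ : ∀ t, HasDerivAt Ω (Ω' t) t)
    -- definitions of the error terms along the trajectory
    (A : ℝ → ℝ) (B : ℝ → ℝ) (eRA eRB eR u : ℝ → Fin 3 → ℝ)
    (hA : ∀ t, A t = (1 / 2) * trace (Matrix.diagonal ![g1, g2, g3] * (1 - Rdᵀ * R t)))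
    (hB : ∀ t, B t = 1 - (1 / α) * Real.log
      ((Real.cos θ - r ⬝ᵥ ((R t)ᵀ *ᵥ v)) / (1 + Real.cos θ)))
    (heRA : ∀ t, eRA t = (1 / 2 : ℝ) • vee (Matrix.diagonal ![g1, g2, g3] * Rdᵀ * R t -
      (R t)ᵀ * Rd * Matrix.diagonal ![g1, g2, g3]))
    (heRB : ∀ t, eRB t = (1 / (α * (r ⬝ᵥ ((R t)ᵀ *ᵥ v) - Real.cos θ))) •
      crossProduct ((R t)ᵀ *ᵥ v) r)
    (heR : ∀ t, eR t = B t • eRA t + A t • eRB t)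
    -- feedback law and closed-loop dynamics
    (hu : ∀ t, u t = -(kR • eR t) - kΩ • Ω t + crossProduct (Ω t) (J *ᵥ Ω t))
    (hdyn : ∀ t, J *ᵥ Ω' t + crossProduct (Ω t) (J *ᵥ Ω t) = u t) (t : ℝ) :
    HasDerivAt (fun s => (1 / 2) * (Ω s ⬝ᵥ (J *ᵥ Ω s)) + kR * (A s * B s))
      (-(kΩ * (Ω t ⬝ᵥ Ω t))) t := by
  set G : Matrix (Fin 3) (Fin 3) ℝ := Matrix.diagonal ![g1, g2, g3] with hGdef
  -- derivative of A
  have hAfun : A = fun s => (1 / 2) * Matrix.trace G - (1 / 2) * Matrix.trace ((G * Rdᵀ) * R s) := by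
    funext s
    rw [hA s, Matrix.mul_sub, Matrix.mul_one, Matrix.trace_sub, ← Matrix.mul_assoc]
    ring
  have h1 := hasDerivAt_trace_mul (G * Rdᵀ) R (R t * hat (Ω t)) t (hkin t)
  have hAderiv : HasDerivAt A (eRA t ⬝ᵥ Ω t) t := by
    rw [hAfun]
    have h2 := (h1.const_mul (1 / 2)).const_sub ((1 / 2) * Matrix.trace G)
    refine h2.congr_deriv (Eq.symm ?_)
    rw [← Matrix.mul_assoc, trace_mul_hat, heRA t, smul_dotProduct]
    have hMT : (G * Rdᵀ * R t)ᵀ = (R t)ᵀ * Rd * G := by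
      rw [hGdef]
      simp [Matrix.transpose_mul, Matrix.diagonal_transpose, Matrix.mul_assoc]
    rw [← hMT, smul_eq_mul]
    ring
  -- derivative of B
  have hcos : 0 < Real.cos θ := by
    apply Real.cos_pos_of_mem_Ioo
    constructor
    · have := Real.pi_pos; have := hθ.1; linarith
    · exact hθ.2
  have hden : (0:ℝ) < 1 + Real.cos θ := by linarith
  have hnum : 0 < Real.cos θ - r ⬝ᵥ ((R t)ᵀ *ᵥ v) := sub_pos.2 (hcon t)
  have harg : (Real.cos θ - r ⬝ᵥ ((R t)ᵀ *ᵥ v)) / (1 + Real.cos θ) ≠ 0 :=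
    ne_of_gt (div_pos hnum hden)
  have hBfun : B = fun s => 1 - (1 / α) * Real.log
      ((Real.cos θ - r ⬝ᵥ ((R s)ᵀ *ᵥ v)) / (1 + Real.cos θ)) := funext hB
  have hf := hasDerivAt_dot_transpose v r R (R t * hat (Ω t)) t (hkin t)
  have hfval : r ⬝ᵥ ((R t * hat (Ω t))ᵀ *ᵥ v) = -(crossProduct ((R t)ᵀ *ᵥ v) r ⬝ᵥ Ω t) := by
    rw [Matrix.transpose_mul, ← Matrix.mulVec_mulVec, dot_hatT]
  have hBderiv : HasDerivAt B (eRB t ⬝ᵥ Ω t) t := by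
    rw [hBfun]
    have h3 := ((((hf.const_sub (Real.cos θ)).div_const
      (1 + Real.cos θ)).log harg).const_mul (1 / α)).const_sub 1
    refine h3.congr_deriv (Eq.symm ?_)
    rw [heRB t, smul_dotProduct, hfval]
    set F := r ⬝ᵥ ((R t)ᵀ *ᵥ v) with hF
    set X := crossProduct ((R t)ᵀ *ᵥ v) r ⬝ᵥ Ω t with hX
    have hα' : α ≠ 0 := ne_of_gt hα
    have hden' : (1 : ℝ) + Real.cos θ ≠ 0 := ne_of_gt hden
    have hnum' : Real.cos θ - r ⬝ᵥ ((R t)ᵀ *ᵥ v) ≠ 0 := ne_of_gt hnum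
    have hnum'' : F - Real.cos θ ≠ 0 := by
      intro h; apply hnum'; linarith [sub_eq_zero.mp h]
    rw [smul_eq_mul]
    field_simp
    ring
  -- derivative of the kinetic term
  have hΩi : ∀ i, HasDerivAt (fun s => Ω s i) (Ω' t i) t := fun i => by
    have := (ContinuousLinearMap.proj (R := ℝ) (φ := fun _ : Fin 3 => ℝ)
      i).hasFDerivAt.comp_hasDerivAt t (hΩ t)
    exact this
  have hK : HasDerivAt (fun s => Ω s ⬝ᵥ (J *ᵥ Ω s))
      (Ω' t ⬝ᵥ (J *ᵥ Ω t) + Ω t ⬝ᵥ (J *ᵥ Ω' t)) t := by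
    have key : ∀ i ∈ Finset.univ, HasDerivAt (fun s => Ω s i * ∑ j, J i j * Ω s j)
        (Ω' t i * (∑ j, J i j * Ω t j) + Ω t i * ∑ j, J i j * Ω' t j) t := fun i _ =>
      (hΩi i).mul (HasDerivAt.fun_sum fun j _ => (hΩi j).const_mul (J i j))
    have h := HasDerivAt.fun_sum key
    simp only [Finset.sum_add_distrib] at h
    simpa [dotProduct, Matrix.mulVec] using h
  -- assemble
  have hV := (hK.const_mul (1 / 2)).add ((hAderiv.mul hBderiv).const_mul kR)
  refine hV.congr_deriv (Eq.symm ?_)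
  -- algebraic identification of the derivative
  have hs : ∀ i j, J i j = J j i := fun i j => by
    conv_lhs => rw [← hJsymm]
    simp [Matrix.transpose_apply]
  have hsymdot : Ω' t ⬝ᵥ (J *ᵥ Ω t) = Ω t ⬝ᵥ (J *ᵥ Ω' t) := by
    simp only [dotProduct, Matrix.mulVec, Fin.sum_univ_three]
    rw [hs 1 0, hs 2 0, hs 2 1]
    ring
  have hJO : J *ᵥ Ω' t = -(kR • eR t) - kΩ • Ω t := by
    have h := hdyn t
    rw [hu t] at h
    exact add_right_cancel h
  have hdot2 : Ω t ⬝ᵥ (J *ᵥ Ω' t) = -(kR * (Ω t ⬝ᵥ eR t)) - kΩ * (Ω t ⬝ᵥ Ω t) := by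
    rw [hJO]
    simp [dotProduct_sub, dotProduct_neg, dotProduct_smul, smul_eq_mul]
  have hdot3 : Ω t ⬝ᵥ eR t = B t * (Ω t ⬝ᵥ eRA t) + A t * (Ω t ⬝ᵥ eRB t) := by
    rw [heR t]
    simp [dotProduct_add, dotProduct_smul, smul_eq_mul]
  rw [hsymdot, hdot2, hdot3, dotProduct_comm (eRA t), dotProduct_comm (eRB t)]
  ring
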